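/- Let (Ω,𝓕,ℙ) be a probability space, let Σ̂_n : Ω → 𝕊₊ᵖ be measurable with Σ̂_n → Σ₀ ∈ 𝕊₊ᵖ ℙ-almost surely, and let ε_n > 0 with ε_n → 0. Suppose the divergence D satisfies Assumption 2, the generator d is (jointly) continuous on ℝ₊ × (0,∞), and for every n, ℙ-almost surely Assumptions 1, 3 and 4 hold for the nominal matrix Σ̂_n and radius ε_n. Let X*_n denote the unique minimizer of the primal problem (CSE) with nominal matrix Σ̂_n and radius ε_n. Then X*_n → Σ₀ ℙ-almost surely (in Frobenius norm). -/

import Mathlib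

open Matrix Set Filter MeasureTheory
open scoped BigOperators Classical

noncomputable section

/-- The space of real `p × p` matrices. -/
abbrev Mat (p : ℕ) := Matrix (Fin p) (Fin p) ℝ

/-- Orthogonal matrix. -/
def IsOrthoMat {p : ℕ} (V : Mat p) : Prop := V * Vᵀ = 1

/-- The loss function `Tr(X²) − 2 Tr(Σ X)` of the estimation problem. -/
def cseLoss {p : ℕ} (X S : Mat p) : ℝ := (X * X).trace - 2 * (S * X).trace

/-- Squared Frobenius norm. -/
def frobSq {p : ℕ} (X : Mat p) : ℝ := (Xᵀ * X).trace

/-- Feasibility for the uncertainty set `B_ε(Σ̂)`. -/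
def Feas {p : ℕ} (D : Mat p → Mat p → EReal) (Sh : Mat p) (ε : ℝ) (S : Mat p) : Prop :=
  S.PosSemidef ∧ D S Sh ≤ (ε : EReal)

/-- The worst-case (primal) objective of the problem (CSE). -/
def primalVal {p : ℕ} (D : Mat p → Mat p → EReal) (Sh : Mat p) (ε : ℝ) (X : Mat p) : EReal :=
  ⨆ S : {S : Mat p // Feas D Sh ε S}, (cseLoss X S.1 : EReal)

/-- The inner (dual) objective. -/
def dualVal {p : ℕ} (S : Mat p) : EReal :=
  ⨅ X : {X : Mat p // X.PosSemidef}, (cseLoss X.1 S : EReal)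

/-- `X` solves the primal problem (CSE). -/
def IsCSESol {p : ℕ} (D : Mat p → Mat p → EReal) (Sh : Mat p) (ε : ℝ) (X : Mat p) : Prop :=
  X.PosSemidef ∧ ∀ Y : Mat p, Y.PosSemidef → primalVal D Sh ε X ≤ primalVal D Sh ε Y

/-- `S` solves the dual problem. -/
def IsDualSol {p : ℕ} (D : Mat p → Mat p → EReal) (Sh : Mat p) (ε : ℝ) (S : Mat p) : Prop :=
  Feas D Sh ε S ∧ ∀ T : Mat p, Feas D Sh ε T → dualVal T ≤ dualVal S

/-- `S` solves the problem (P_Mat). -/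
def IsPMatSol {p : ℕ} (D : Mat p → Mat p → EReal) (Sh : Mat p) (ε : ℝ) (S : Mat p) : Prop :=
  Feas D Sh ε S ∧ ∀ T : Mat p, Feas D Sh ε T → frobSq S ≤ frobSq T

/-- Assumption 1 (minimax): the optimal value of (CSE) equals the optimal value of the dual. -/
def MinimaxEq {p : ℕ} (D : Mat p → Mat p → EReal) (Sh : Mat p) (ε : ℝ) : Prop :=
  (⨅ X : {X : Mat p // X.PosSemidef}, primalVal D Sh ε X.1)
    = ⨆ S : {S : Mat p // Feas D Sh ε S}, dualVal S.1

/-- `x` solves the problem (P_Vec). -/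
def IsPVecSol {p : ℕ} (d : ℝ → ℝ → EReal) (xh : Fin p → ℝ) (ε : ℝ) (x : Fin p → ℝ) : Prop :=
  (∀ i, 0 ≤ x i) ∧ (∑ i, d (x i) (xh i)) ≤ (ε : EReal) ∧
  ∀ y : Fin p → ℝ, (∀ i, 0 ≤ y i) → (∑ i, d (y i) (xh i)) ≤ (ε : EReal) →
    ∑ i, (x i) ^ 2 ≤ ∑ i, (y i) ^ 2

/-- `D` is a divergence: nonnegative, and zero iff the arguments coincide (on its domain). -/
def DivergenceBasic {p : ℕ} (D : Mat p → Mat p → EReal) : Prop :=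
  (∀ X Y : Mat p, 0 ≤ D X Y) ∧
  (∀ X Y : Mat p, X.PosSemidef → Y.PosSemidef → D X Y ≠ ⊤ → (D X Y = 0 ↔ X = Y))

/-- Assumption 2 (spectral divergence) for `D` with generator `d`:
(a) orthogonal equivariance, (b) spectrality with continuous generator, (c) rearrangement. -/
def Assumption2 {p : ℕ} (D : Mat p → Mat p → EReal) (d : ℝ → ℝ → EReal) : Prop :=
  (∀ X Y : Mat p, X.PosSemidef → Y.PosSemidef → ∀ V : Mat p, IsOrthoMat V →
      D X Y = D (V * X * Vᵀ) (V * Y * Vᵀ)) ∧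
  (∀ x y : Fin p → ℝ, (∀ i, 0 ≤ x i) → (∀ i, 0 ≤ y i) →
      D (Matrix.diagonal x) (Matrix.diagonal y) = ∑ i, d (x i) (y i)) ∧
  (∀ b : ℝ, 0 < b → ContinuousOn (fun a => d a b) (Set.Ici 0)) ∧
  (∀ x y : Fin p → ℝ, Monotone x → Monotone y → (∀ i, 0 ≤ x i) → (∀ i, 0 ≤ y i) →
    ∀ V : Mat p, IsOrthoMat V →
      D (Matrix.diagonal x) (Matrix.diagonal y)
        ≤ D (V * Matrix.diagonal x * Vᵀ) (Matrix.diagonal y) ∧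
      (D (V * Matrix.diagonal x * Vᵀ) (Matrix.diagonal y) ≠ ⊤ →
        (D (V * Matrix.diagonal x * Vᵀ) (Matrix.diagonal y)
            = D (Matrix.diagonal x) (Matrix.diagonal y)
          ↔ V * Matrix.diagonal x * Vᵀ = Matrix.diagonal x)))

/-- The generator-level part of Assumption 2: `d` is a spectral divergence on `ℝ₊`. -/
def GenBasic (d : ℝ → ℝ → EReal) : Prop :=
  (∀ a b : ℝ, 0 ≤ a → 0 ≤ b → 0 ≤ d a b) ∧
  (∀ a b : ℝ, 0 ≤ a → 0 ≤ b → d a b ≠ ⊤ → (d a b = 0 ↔ a = b)) ∧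
  (∀ b : ℝ, 0 < b → ContinuousOn (fun a => d a b) (Set.Ici 0))

/-- Assumption 3 (regularity of input parameters). -/
def Assumption3 {p : ℕ} (d : ℝ → ℝ → EReal) (xh : Fin p → ℝ) (ε : ℝ) : Prop :=
  (∀ i, d (xh i) (xh i) ≠ ⊤) ∧ 0 < ε ∧ (ε : EReal) < ∑ i, d 0 (xh i)

/-- Assumption 4 (smoothness and convexity of the generator): for every `b > 0`,
`a ↦ d(a,b)` is finite and twice continuously differentiable on `(0,∞)` with partial
derivatives `d₁, d₂`, and convex on `[0,b]` (as an extended-real-valued function). -/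
def Assumption4 (d : ℝ → ℝ → EReal) (d₁ d₂ : ℝ → ℝ → ℝ) : Prop :=
  (∀ a b : ℝ, 0 < a → 0 < b → d a b ≠ ⊤) ∧
  (∀ a b : ℝ, 0 < a → 0 < b → HasDerivAt (fun t => (d t b).toReal) (d₁ a b) a) ∧
  (∀ a b : ℝ, 0 < a → 0 < b → HasDerivAt (fun t => d₁ t b) (d₂ a b) a) ∧
  (∀ b : ℝ, 0 < b → ContinuousOn (fun a => d₂ a b) (Set.Ioi 0)) ∧
  (∀ b : ℝ, 0 < b → ∀ a₁ ∈ Set.Icc (0:ℝ) b, ∀ a₂ ∈ Set.Icc (0:ℝ) b, ∀ t ∈ Set.Icc (0:ℝ) 1,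
      d (t * a₁ + (1 - t) * a₂) b ≤ (t : EReal) * d a₁ b + ((1 - t : ℝ) : EReal) * d a₂ b)

/-- Assumption 5 (differential inequality): `d` is twice continuously differentiable on
`(0,∞)²` (mixed partial `d₁b` of `d₁` in `b` exists and the second partials are continuous)
and satisfies `a·∂²d/∂a² + b·∂²d/∂a∂b ≥ ∂d/∂a` for `0 < a < b`. -/
def Assumption5 (d₁ d₂ d₁b : ℝ → ℝ → ℝ) : Prop :=
  (∀ a b : ℝ, 0 < a → 0 < b → HasDerivAt (fun t => d₁ a t) (d₁b a b) b) ∧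
  ContinuousOn (fun q : ℝ × ℝ => d₂ q.1 q.2) (Set.Ioi 0 ×ˢ Set.Ioi 0) ∧
  ContinuousOn (fun q : ℝ × ℝ => d₁b q.1 q.2) (Set.Ioi 0 ×ˢ Set.Ioi 0) ∧
  (∀ a b : ℝ, 0 < a → a < b → d₁ a b ≤ a * d₂ a b + b * d₁b a b)

/-- The eigenvalue map `s`: for `γ, b > 0`, `s(γ,b)` is the unique `a ≥ 0` with
`2a + γ·∂d/∂a(a,b) = 0`; and `s(γ,b) = 0` if `γ = 0` or `b = 0`. -/
def EigenMapSpec (d₁ s : ℝ → ℝ → ℝ) : Prop :=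
  (∀ γ b : ℝ, γ = 0 ∨ b = 0 → s γ b = 0) ∧
  (∀ γ b : ℝ, 0 < γ → 0 < b →
    0 ≤ s γ b ∧ 2 * s γ b + γ * d₁ (s γ b) b = 0 ∧
    ∀ a : ℝ, 0 ≤ a → 2 * a + γ * d₁ a b = 0 → a = s γ b)


open scoped Topology

section Helpers
variable {p : ℕ}

lemma psd_transpose {A : Mat p} (hA : A.PosSemidef) : Aᵀ = A := by
  have h := hA.1
  rwa [Matrix.IsHermitian, Matrix.conjTranspose_eq_transpose_of_trivial] at h

lemma ortho_tmul {V : Mat p} (hV : IsOrthoMat V) : Vᵀ * V = 1 :=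
  mul_eq_one_comm.mp hV

lemma ortho_transpose {V : Mat p} (hV : IsOrthoMat V) : IsOrthoMat Vᵀ := by
  unfold IsOrthoMat
  rw [Matrix.transpose_transpose]
  exact ortho_tmul hV

lemma ortho_mul {V W : Mat p} (hV : IsOrthoMat V) (hW : IsOrthoMat W) :
    IsOrthoMat (V * W) := by
  unfold IsOrthoMat at *
  rw [Matrix.transpose_mul, ← mul_assoc, mul_assoc V W, hW, mul_one, hV]

lemma conj_back {A V D : Mat p} (hV : IsOrthoMat V) (h : A = V * D * Vᵀ) :
    Vᵀ * A * V = D := by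
  subst h
  rw [← mul_assoc, ← mul_assoc, ortho_tmul hV, one_mul, mul_assoc, ortho_tmul hV, mul_one]

lemma frobSq_conj {B V : Mat p} (hV : IsOrthoMat V) :
    frobSq (V * B * Vᵀ) = frobSq B := by
  unfold frobSq
  rw [Matrix.transpose_mul, Matrix.transpose_mul, Matrix.transpose_transpose]
  have h1 : V * (Bᵀ * Vᵀ) * (V * B * Vᵀ) = V * (Bᵀ * B * Vᵀ) := by
    simp only [mul_assoc]
    rw [← mul_assoc Vᵀ V, ortho_tmul hV, one_mul]
  rw [h1, Matrix.trace_mul_comm V (Bᵀ * B * Vᵀ), mul_assoc, ortho_tmul hV, mul_one]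

end Helpers

section Helpers2
variable {p : ℕ}

lemma frobSq_diagonal (w : Fin p → ℝ) : frobSq (Matrix.diagonal w) = ∑ i, (w i)^2 := by
  unfold frobSq
  rw [Matrix.diagonal_transpose, Matrix.diagonal_mul_diagonal, Matrix.trace_diagonal]
  simp [sq]

lemma cseLoss_eq {X S : Mat p} (hX : Xᵀ = X) (hS : Sᵀ = S) :
    cseLoss X S = frobSq (X - S) - frobSq S := by
  unfold cseLoss frobSq
  rw [Matrix.transpose_sub, hX, hS, Matrix.sub_mul, Matrix.mul_sub, Matrix.mul_sub,
    Matrix.trace_sub, Matrix.trace_sub, Matrix.trace_sub, Matrix.trace_mul_comm X S]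
  ring

def emb {p : ℕ} (A : Mat p) : EuclideanSpace ℝ (Fin p × Fin p) :=
  WithLp.toLp 2 (fun q : Fin p × Fin p => A q.1 q.2)

lemma emb_sub (A B : Mat p) : emb (A - B) = emb A - emb B := by ext q; simp [emb]

lemma frobSq_eq_norm_sq (A : Mat p) : frobSq A = ‖emb A‖^2 := by
  rw [EuclideanSpace.norm_eq, Real.sq_sqrt (by positivity)]
  unfold frobSq emb
  rw [Matrix.trace]
  simp only [Matrix.diag_apply, Matrix.mul_apply, Matrix.transpose_apply, Real.norm_eq_abs,
    sq_abs, Fintype.sum_prod_type]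
  rw [Finset.sum_comm]
  simp [sq]

lemma frobSq_nonneg (A : Mat p) : 0 ≤ frobSq A := by
  rw [frobSq_eq_norm_sq]; positivity

lemma norm_emb_eq (A : Mat p) : ‖emb A‖ = Real.sqrt (frobSq A) := by
  rw [frobSq_eq_norm_sq, Real.sqrt_sq (norm_nonneg _)]

end Helpers2

section Spectral
variable {p : ℕ}

lemma sortedSpectral {A : Mat p} (hA : A.PosSemidef) :
    ∃ (V : Mat p) (μ : Fin p → ℝ) (σ : Equiv.Perm (Fin p)),
      IsOrthoMat V ∧ Monotone μ ∧ (∀ i, 0 ≤ μ i) ∧ μ = hA.1.eigenvalues ∘ σ ∧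
      A = V * Matrix.diagonal μ * Vᵀ := by
  classical
  set W : Mat p := (hA.1.eigenvectorUnitary : Mat p) with hW
  have hWo : IsOrthoMat W := by
    have := (Matrix.mem_unitaryGroup_iff).mp (hA.1.eigenvectorUnitary).2
    unfold IsOrthoMat
    rwa [← Matrix.conjTranspose_eq_transpose_of_trivial, ← Matrix.star_eq_conjTranspose]
  have hstar : star W = Wᵀ := by
    rw [Matrix.star_eq_conjTranspose, Matrix.conjTranspose_eq_transpose_of_trivial]
  have hspec : A = W * Matrix.diagonal hA.1.eigenvalues * Wᵀ := by
    have h := hA.1.spectral_theorem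
    rw [Unitary.conjStarAlgAut_apply, ← hW, hstar] at h
    exact h
  -- now permutation sorting
  set σ : Equiv.Perm (Fin p) := Tuple.sort hA.1.eigenvalues with hσ
  set μ : Fin p → ℝ := hA.1.eigenvalues ∘ σ with hμ
  have hmono : Monotone μ := Tuple.monotone_sort _
  set Q : Mat p := (σ.symm.toPEquiv.toMatrix : Mat p) with hQ
  have hQT : Qᵀ = (σ.toPEquiv.toMatrix : Mat p) := by
    rw [hQ, ← PEquiv.toMatrix_symm, Equiv.toPEquiv_symm, PEquiv.symm_symm]
  have hQo : IsOrthoMat Q := by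
    unfold IsOrthoMat
    rw [hQT, hQ, ← PEquiv.toMatrix_trans, ← Equiv.toPEquiv_trans]
    simp
  have hkey : Q * Matrix.diagonal μ * Qᵀ = Matrix.diagonal hA.1.eigenvalues := by
    rw [hQT, hQ, PEquiv.toMatrix_toPEquiv_mul, PEquiv.mul_toMatrix_toPEquiv,
      Matrix.submatrix_submatrix]
    simp only [Function.comp_id, Function.id_comp]
    rw [Matrix.submatrix_diagonal_equiv]
    ext i j
    simp [Matrix.diagonal_apply, hμ]
  refine ⟨W * Q, μ, σ, ortho_mul hWo hQo, hmono, fun i => ?_, rfl, ?_⟩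
  · exact hA.eigenvalues_nonneg _
  · rw [Matrix.transpose_mul, show W * Q * Matrix.diagonal μ * (Qᵀ * Wᵀ)
      = W * (Q * Matrix.diagonal μ * Qᵀ) * Wᵀ by simp only [mul_assoc], hkey]
    exact hspec

end Spectral

section ERealHelpers

lemma ereal_coe_sum {ι : Type*} (s : Finset ι) (f : ι → ℝ) :
    ((∑ i ∈ s, f i : ℝ) : EReal) = ∑ i ∈ s, ((f i : ℝ) : EReal) := by
  classical
  induction s using Finset.induction with
  | empty => simp
  | insert _ _ h ih => rw [Finset.sum_insert h, Finset.sum_insert h, EReal.coe_add, ih]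

lemma ereal_single_le_sum {ι : Type*} [Fintype ι] (f : ι → EReal) (h : ∀ i, 0 ≤ f i) (j : ι) :
    f j ≤ ∑ i, f i :=
  Finset.single_le_sum (fun i _ => h i) (Finset.mem_univ j)

lemma ereal_sum_const_nonneg {p : ℕ} (hp : 0 < p) {x : EReal} (h : 0 ≤ ∑ _i : Fin p, x) :
    0 ≤ x := by
  by_contra hx
  push_neg at hx
  have i0 : Fin p := ⟨0, hp⟩
  have h1 : ∑ _i : Fin p, x ≤ x + ∑ _i ∈ Finset.univ.erase i0, x :=
    le_of_eq (Finset.add_sum_erase _ (fun _ => x) (Finset.mem_univ i0)).symm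
  have h2 : ∑ _i ∈ Finset.univ.erase i0, x ≤ 0 :=
    Finset.sum_nonpos fun i _ => le_of_lt hx
  have h3 : x + ∑ _i ∈ Finset.univ.erase i0, x ≤ x + 0 := add_le_add_right h2 x
  rw [add_zero] at h3
  exact absurd (lt_of_le_of_lt (h.trans (h1.trans h3)) hx) (lt_irrefl _)

end ERealHelpers



section DHelpers
variable {p : ℕ} {D : Mat p → Mat p → EReal} {d : ℝ → ℝ → EReal}

lemma d_nonneg (hp : 0 < p) (hDb : DivergenceBasic D) (hA2 : Assumption2 D d)
    {a b : ℝ} (ha : 0 ≤ a) (hb : 0 ≤ b) : 0 ≤ d a b := by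
  have hspec := hA2.2.1 (fun _ => a) (fun _ => b) (fun _ => ha) (fun _ => hb)
  have h0 := hDb.1 (Matrix.diagonal (fun _ : Fin p => a)) (Matrix.diagonal (fun _ => b))
  rw [hspec] at h0
  exact ereal_sum_const_nonneg hp h0

lemma d_self_eq_zero (hp : 0 < p) (hDb : DivergenceBasic D) (hA2 : Assumption2 D d)
    {a : ℝ} (ha : 0 ≤ a) (hne : d a a ≠ ⊤) : d a a = 0 := by
  have h0 : (0 : EReal) ≤ d a a := d_nonneg hp hDb hA2 ha ha
  have hnb : d a a ≠ ⊥ := fun hbot => by simp [hbot] at h0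
  have hr : ((d a a).toReal : EReal) = d a a := EReal.coe_toReal hne hnb
  set r := (d a a).toReal with hrdef
  have hspec := hA2.2.1 (fun _ : Fin p => a) (fun _ => a) (fun _ => ha) (fun _ => ha)
  have hsum : D (Matrix.diagonal (fun _ : Fin p => a)) (Matrix.diagonal (fun _ => a))
      = ((p * r : ℝ) : EReal) := by
    rw [hspec]
    have : ∀ i : Fin p, d a a = ((r : ℝ) : EReal) := fun i => hr.symm
    rw [Finset.sum_congr rfl (fun i _ => this i), ← ereal_coe_sum]
    norm_num [Finset.sum_const, mul_comm]
  have hpsd : (Matrix.diagonal (fun _ : Fin p => a)).PosSemidef :=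
    Matrix.posSemidef_diagonal_iff.mpr fun _ => ha
  have hzero : D (Matrix.diagonal (fun _ : Fin p => a)) (Matrix.diagonal (fun _ => a)) = 0 :=
    ((hDb.2 _ _ hpsd hpsd (by rw [hsum]; exact EReal.coe_ne_top _)).mpr rfl)
  rw [hsum] at hzero
  have : (p : ℝ) * r = 0 := by exact_mod_cast hzero
  have hr0 : r = 0 := by
    rcases mul_eq_zero.mp this with h | h
    · exact absurd h (by positivity)
    · exact h
  rw [← hr, hr0]; rfl

lemma d_zero_imp_eq (hp : 0 < p) (hDb : DivergenceBasic D) (hA2 : Assumption2 D d)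
    {a b : ℝ} (ha : 0 ≤ a) (hb : 0 ≤ b) (h : d a b = 0) : a = b := by
  have hspec := hA2.2.1 (fun _ : Fin p => a) (fun _ => b) (fun _ => ha) (fun _ => hb)
  have hsum : D (Matrix.diagonal (fun _ : Fin p => a)) (Matrix.diagonal (fun _ => b)) = 0 := by
    rw [hspec]
    exact Finset.sum_eq_zero fun i _ => h
  have hpsda : (Matrix.diagonal (fun _ : Fin p => a)).PosSemidef :=
    Matrix.posSemidef_diagonal_iff.mpr fun _ => ha
  have hpsdb : (Matrix.diagonal (fun _ : Fin p => b)).PosSemidef :=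
    Matrix.posSemidef_diagonal_iff.mpr fun _ => hb
  have heq := (hDb.2 _ _ hpsda hpsdb (by rw [hsum]; exact ne_of_eq_of_ne rfl (by simp))).mp hsum
  have i0 : Fin p := ⟨0, hp⟩
  have := congrArg (fun M : Mat p => M i0 i0) heq
  simpa [Matrix.diagonal_apply_eq] using this

end DHelpers


section FeasHelpers
variable {p : ℕ} {D : Mat p → Mat p → EReal} {d : ℝ → ℝ → EReal}

lemma psd_conj {A : Mat p} (hA : A.PosSemidef) (M : Mat p) :
    (M * A * Mᵀ).PosSemidef := by
  have := hA.mul_mul_conjTranspose_same M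
  rwa [Matrix.conjTranspose_eq_transpose_of_trivial] at this

lemma aligned_feas (hA2 : Assumption2 D d) {Sh : Mat p} {V : Mat p} {μ : Fin p → ℝ}
    (hV : IsOrthoMat V) (hμ0 : ∀ i, 0 ≤ μ i)
    (hdecomp : Sh = V * Matrix.diagonal μ * Vᵀ) {ε : ℝ} {s : Fin p → ℝ}
    (hs0 : ∀ i, 0 ≤ s i) (hsum : (∑ i, d (s i) (μ i)) ≤ (ε : EReal)) :
    Feas D Sh ε (V * Matrix.diagonal s * Vᵀ) := by
  have hpsds : (Matrix.diagonal s).PosSemidef := Matrix.posSemidef_diagonal_iff.mpr hs0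
  have hpsdμ : (Matrix.diagonal μ).PosSemidef := Matrix.posSemidef_diagonal_iff.mpr hμ0
  refine ⟨psd_conj hpsds V, ?_⟩
  have heq := hA2.1 (Matrix.diagonal s) (Matrix.diagonal μ) hpsds hpsdμ V hV
  rw [hdecomp, ← heq, hA2.2.1 s μ hs0 hμ0]
  exact hsum

lemma feas_vector (hA2 : Assumption2 D d) {Sh : Mat p} (hSh : Sh.PosSemidef)
    {V : Mat p} {μ : Fin p → ℝ} (hV : IsOrthoMat V) (hμm : Monotone μ)
    (hμ0 : ∀ i, 0 ≤ μ i) (hdecomp : Sh = V * Matrix.diagonal μ * Vᵀ)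
    {ε : ℝ} {T : Mat p} (hT : T.PosSemidef) (hfeas : D T Sh ≤ (ε : EReal)) :
    ∃ t : Fin p → ℝ, (∀ i, 0 ≤ t i) ∧ (∑ i, d (t i) (μ i)) ≤ (ε : EReal) ∧
      frobSq T = ∑ i, (t i) ^ 2 := by
  have hVT : IsOrthoMat Vᵀ := ortho_transpose hV
  have hB : (Vᵀ * T * V).PosSemidef := by
    have := psd_conj hT Vᵀ
    rwa [Matrix.transpose_transpose] at this
  obtain ⟨U, t, τ, hU, htm, ht0, -, hBdec⟩ := sortedSpectral hB
  refine ⟨t, ht0, ?_, ?_⟩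
  · have h1 := hA2.1 T Sh hT hSh Vᵀ hVT
    rw [Matrix.transpose_transpose] at h1
    have h2 : Vᵀ * Sh * V = Matrix.diagonal μ := conj_back hV hdecomp
    rw [h2] at h1
    have h3 := (hA2.2.2.2 t μ htm hμm ht0 hμ0 U hU).1
    rw [← hBdec] at h3
    rw [← hA2.2.1 t μ ht0 hμ0]
    calc D (Matrix.diagonal t) (Matrix.diagonal μ) ≤ D (Vᵀ * T * V) (Matrix.diagonal μ) := h3
      _ = D T Sh := h1.symm
      _ ≤ (ε : EReal) := hfeas
  · have h4 : frobSq (Vᵀ * T * V) = frobSq T := by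
      have := frobSq_conj (B := T) hVT
      rwa [Matrix.transpose_transpose] at this
    rw [← h4, hBdec, frobSq_conj hU, frobSq_diagonal]

end FeasHelpers


section MainIneq
variable {p : ℕ} {D : Mat p → Mat p → EReal} {d : ℝ → ℝ → EReal}

lemma main_ineq (hA2 : Assumption2 D d) {Sh : Mat p} (hSh : Sh.PosSemidef)
    {V : Mat p} {μ : Fin p → ℝ} (hV : IsOrthoMat V) (hμm : Monotone μ)
    (hμ0 : ∀ i, 0 ≤ μ i) (hdecomp : Sh = V * Matrix.diagonal μ * Vᵀ)
    {ε : ℝ} (hmm : MinimaxEq D Sh ε) {Xs : Mat p} (hsol : IsCSESol D Sh ε Xs)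
    {s : Fin p → ℝ} (hs0 : ∀ i, 0 ≤ s i) (hsfeas : (∑ i, d (s i) (μ i)) ≤ (ε : EReal)) :
    frobSq (Xs - V * Matrix.diagonal s * Vᵀ)
      ≤ (∑ i, (s i) ^ 2) -
        sInf ((fun t : Fin p → ℝ => ∑ i, (t i) ^ 2) ''
          {t | (∀ i, 0 ≤ t i) ∧ (∑ i, d (t i) (μ i)) ≤ (ε : EReal)}) := by
  classical
  set F : Set (Fin p → ℝ) := {t | (∀ i, 0 ≤ t i) ∧ (∑ i, d (t i) (μ i)) ≤ (ε : EReal)} with hF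
  set v : ℝ := sInf ((fun t : Fin p → ℝ => ∑ i, (t i) ^ 2) '' F) with hv
  have hbdd : BddBelow ((fun t : Fin p → ℝ => ∑ i, (t i) ^ 2) '' F) := by
    refine ⟨0, fun y hy => ?_⟩
    obtain ⟨t, -, rfl⟩ := hy
    positivity
  set Sg : Mat p := V * Matrix.diagonal s * Vᵀ with hSg
  have hSgfeas : Feas D Sh ε Sg := aligned_feas hA2 hV hμ0 hdecomp hs0 hsfeas
  -- upper bound : primalVal Xs ≤ -v
  have h1 : primalVal D Sh ε Xs ≤ ⨅ X : {X : Mat p // X.PosSemidef}, primalVal D Sh ε X.1 :=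
    le_iInf fun Y => hsol.2 Y.1 Y.2
  rw [hmm] at h1
  have h2 : (⨆ S : {S : Mat p // Feas D Sh ε S}, dualVal S.1) ≤ ((-v : ℝ) : EReal) := by
    refine iSup_le fun T => ?_
    have hTd : dualVal T.1 ≤ ((cseLoss T.1 T.1 : ℝ) : EReal) :=
      iInf_le (fun X : {X : Mat p // X.PosSemidef} => ((cseLoss X.1 T.1 : ℝ) : EReal))
        ⟨T.1, T.2.1⟩
    have hT0 : cseLoss T.1 T.1 = -frobSq T.1 := by
      rw [cseLoss_eq (psd_transpose T.2.1) (psd_transpose T.2.1), sub_self]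
      have : frobSq (0 : Mat p) = 0 := by
        unfold frobSq; simp
      rw [this, zero_sub]
    obtain ⟨t, ht0, htfeas, hteq⟩ := feas_vector hA2 hSh hV hμm hμ0 hdecomp T.2.1 T.2.2
    have hvle : v ≤ frobSq T.1 := by
      rw [hteq]
      exact csInf_le hbdd ⟨t, ⟨ht0, htfeas⟩, rfl⟩
    calc dualVal T.1 ≤ ((cseLoss T.1 T.1 : ℝ) : EReal) := hTd
      _ ≤ ((-v : ℝ) : EReal) := by
          rw [hT0]
          exact EReal.coe_le_coe_iff.mpr (by linarith)
  -- lower bound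
  have h3 : ((cseLoss Xs Sg : ℝ) : EReal) ≤ primalVal D Sh ε Xs :=
    le_iSup (fun S : {S : Mat p // Feas D Sh ε S} => ((cseLoss Xs S.1 : ℝ) : EReal))
      ⟨Sg, hSgfeas⟩
  have h4 : cseLoss Xs Sg ≤ -v := EReal.coe_le_coe_iff.mp ((h3.trans h1).trans h2)
  have hSgT : Sgᵀ = Sg := psd_transpose hSgfeas.1
  have h5 : cseLoss Xs Sg = frobSq (Xs - Sg) - frobSq Sg :=
    cseLoss_eq (psd_transpose hsol.1) hSgT
  have h6 : frobSq Sg = ∑ i, (s i) ^ 2 := by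
    rw [hSg, frobSq_conj hV, frobSq_diagonal]
  rw [h5, h6] at h4
  linarith

end MainIneq

/-- Proposition: consistency.
Let `Σ̂ₙ` be measurable estimators converging `ℙ`-a.s. (in Frobenius norm) to
`Σ₀ ∈ 𝕊₊ᵖ`, and let `εₙ > 0` with `εₙ → 0`. Suppose `D` satisfies Assumption 2, the
generator `d` is jointly continuous on `ℝ₊ × (0,∞)`, and for every `n`, `ℙ`-a.s.,
Assumptions 1 and 3 hold at `(Σ̂ₙ, εₙ)` (Assumption 4 holds globally). If `X*ₙ` is the
minimizer of (CSE) with nominal matrix `Σ̂ₙ` and radius `εₙ`, then `X*ₙ → Σ₀` `ℙ`-a.s.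
in Frobenius norm. -/
theorem stmt_8 {p : ℕ}
    (D : Mat p → Mat p → EReal) (d : ℝ → ℝ → EReal) (d₁ d₂ : ℝ → ℝ → ℝ)
    (hDbasic : DivergenceBasic D)
    (hA2 : Assumption2 D d)
    (hdcont : ContinuousOn (fun q : ℝ × ℝ => d q.1 q.2) (Set.Ici 0 ×ˢ Set.Ioi 0))
    (hA4 : Assumption4 d d₁ d₂)
    {Ω : Type*} [MeasurableSpace Ω] (P : Measure Ω) [IsProbabilityMeasure P]
    (Sn : ℕ → Ω → Mat p)
    (hmeas : ∀ n i j, Measurable fun ω => Sn n ω i j)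
    (hpsd : ∀ n ω, (Sn n ω).PosSemidef)
    (S0 : Mat p) (hS0 : S0.PosSemidef)
    (hconv : ∀ᵐ ω ∂P, Tendsto (fun n => frobSq (Sn n ω - S0)) atTop (nhds 0))
    (eps : ℕ → ℝ) (heps : ∀ n, 0 < eps n) (heps0 : Tendsto eps atTop (nhds 0))
    (Xn : ℕ → Ω → Mat p)
    (hA13 : ∀ n, ∀ᵐ ω ∂P,
      MinimaxEq D (Sn n ω) (eps n) ∧
      (∀ i, d ((hpsd n ω).1.eigenvalues i) ((hpsd n ω).1.eigenvalues i) ≠ ⊤) ∧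
      ((eps n : ℝ) : EReal) < ∑ i, d 0 ((hpsd n ω).1.eigenvalues i))
    (hXn : ∀ n, ∀ᵐ ω ∂P, IsCSESol D (Sn n ω) (eps n) (Xn n ω)) :
    ∀ᵐ ω ∂P, Tendsto (fun n => frobSq (Xn n ω - S0)) atTop (nhds 0) := by
  classical
  rcases Nat.eq_zero_or_pos p with hp0 | hp
  · refine Filter.Eventually.of_forall fun ω => ?_
    have hz : ∀ n, frobSq (Xn n ω - S0) = 0 := by
      intro n
      subst hp0
      simp [frobSq, Matrix.trace]
    simpa [hz] using (tendsto_const_nhds : Tendsto (fun _ : ℕ => (0 : ℝ)) atTop (𝓝 0))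
  have hae : ∀ᵐ ω ∂P, Tendsto (fun n => frobSq (Sn n ω - S0)) atTop (nhds 0) ∧
      ∀ n, (MinimaxEq D (Sn n ω) (eps n) ∧
        (∀ i, d ((hpsd n ω).1.eigenvalues i) ((hpsd n ω).1.eigenvalues i) ≠ ⊤) ∧
        ((eps n : ℝ) : EReal) < ∑ i, d 0 ((hpsd n ω).1.eigenvalues i)) ∧
        IsCSESol D (Sn n ω) (eps n) (Xn n ω) := by
    filter_upwards [hconv, ae_all_iff.mpr fun n => (hA13 n).and (hXn n)] with ω h1 h2
    exact ⟨h1, h2⟩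
  filter_upwards [hae] with ω hω
  obtain ⟨hconvω, hn⟩ := hω
  -- sorted spectral decompositions of the estimators
  choose V μ σ hVo hμm hμ0 hμeig hdec using fun n => sortedSpectral (hpsd n ω)
  have hdtop : ∀ n i, d (μ n i) (μ n i) ≠ ⊤ := by
    intro n i
    rw [congrFun (hμeig n) i]
    exact (hn n).1.2.1 (σ n i)
  -- μ n is feasible for the vector problem
  have hμfeas : ∀ n, (∑ i, d (μ n i) (μ n i)) ≤ ((eps n : ℝ) : EReal) := by
    intro n
    have h0 : (∑ i, d (μ n i) (μ n i)) = 0 :=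
      Finset.sum_eq_zero fun i _ =>
        d_self_eq_zero hp hDbasic hA2 (hμ0 n i) (hdtop n i)
    rw [h0]
    exact_mod_cast EReal.coe_le_coe_iff.mpr (le_of_lt (heps n))
  set F : ℕ → Set (Fin p → ℝ) :=
    fun n => {t | (∀ i, 0 ≤ t i) ∧ (∑ i, d (t i) (μ n i)) ≤ ((eps n : ℝ) : EReal)} with hF
  set v : ℕ → ℝ :=
    fun n => sInf ((fun t : Fin p → ℝ => ∑ i, (t i) ^ 2) '' F n) with hv
  have hbdd : ∀ n, BddBelow ((fun t : Fin p → ℝ => ∑ i, (t i) ^ 2) '' F n) := by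
    intro n
    refine ⟨0, fun y hy => ?_⟩
    obtain ⟨t, -, rfl⟩ := hy
    positivity
  have hμmem : ∀ n, μ n ∈ F n := fun n => ⟨hμ0 n, hμfeas n⟩
  have hvle : ∀ n, v n ≤ ∑ i, (μ n i) ^ 2 := fun n =>
    csInf_le (hbdd n) ⟨μ n, hμmem n, rfl⟩
  -- choose near-optimal vectors
  have hex : ∀ n, ∃ s : Fin p → ℝ, (∀ i, 0 ≤ s i) ∧
      (∑ i, d (s i) (μ n i)) ≤ ((eps n : ℝ) : EReal) ∧ ∑ i, (s i) ^ 2 < v n + eps n := by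
    intro n
    have hne : ((fun t : Fin p → ℝ => ∑ i, (t i) ^ 2) '' F n).Nonempty :=
      ⟨∑ i, (μ n i) ^ 2, ⟨μ n, hμmem n, rfl⟩⟩
    obtain ⟨y, hy, hylt⟩ := exists_lt_of_csInf_lt hne (lt_add_of_pos_right (v n) (heps n))
    obtain ⟨t, htF, rfl⟩ := hy
    exact ⟨t, htF.1, htF.2, hylt⟩
  choose s hs0 hsf hsv using hex
  -- the aligned feasible matrices
  set Sg : ℕ → Mat p := fun n => V n * Matrix.diagonal (s n) * (V n)ᵀ with hSgdef
  -- key inequality 1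
  have key1 : ∀ n, frobSq (Xn n ω - Sg n) ≤ eps n := by
    intro n
    have h := main_ineq hA2 (hpsd n ω) (hVo n) (hμm n) (hμ0 n) (hdec n)
      (hn n).1.1 (hn n).2 (hs0 n) (hsf n)
    have h2 : (∑ i, (s n i) ^ 2) - v n ≤ eps n := by
      have := hsv n; linarith
    calc frobSq (Xn n ω - Sg n) ≤ (∑ i, (s n i) ^ 2) - v n := h
      _ ≤ eps n := h2
  -- convergence of frobSq (Sn n ω)
  have hembconv : Tendsto (fun n => emb (Sn n ω)) atTop (𝓝 (emb S0)) := by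
    rw [tendsto_iff_norm_sub_tendsto_zero]
    have : ∀ n, ‖emb (Sn n ω) - emb S0‖ = Real.sqrt (frobSq (Sn n ω - S0)) := by
      intro n
      rw [← emb_sub, norm_emb_eq]
    simp only [this]
    have hsq : Tendsto Real.sqrt (𝓝 0) (𝓝 0) := by
      have := Real.continuous_sqrt.tendsto 0
      rwa [Real.sqrt_zero] at this
    exact hsq.comp hconvω
  have hfSn : Tendsto (fun n => frobSq (Sn n ω)) atTop (𝓝 (frobSq S0)) := by
    simp only [frobSq_eq_norm_sq]
    exact ((continuous_norm.tendsto _).comp hembconv).pow 2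
  have hμsq : ∀ n, ∑ i, (μ n i) ^ 2 = frobSq (Sn n ω) := by
    intro n
    rw [hdec n, frobSq_conj (hVo n), frobSq_diagonal]
  -- uniform bounds
  obtain ⟨C1, hC1⟩ := (hfSn.bddAbove_range).imp fun C hC => fun n =>
    hC (Set.mem_range_self n)
  obtain ⟨C2, hC2⟩ := (heps0.bddAbove_range).imp fun C hC => fun n =>
    hC (Set.mem_range_self n)
  set C : ℝ := max C1 0 + max C2 0 + 1 with hC
  have hCpos : 0 < C := by
    have := le_max_right C1 (0:ℝ); have := le_max_right C2 (0:ℝ); positivity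
  have hμb : ∀ n, ∑ i, (μ n i) ^ 2 ≤ C := by
    intro n
    have := hC1 n
    have h2 := le_max_left C1 (0:ℝ)
    have h3 : (0:ℝ) ≤ max C2 0 := le_max_right C2 0
    rw [hμsq n]; linarith
  have hsb : ∀ n, ∑ i, (s n i) ^ 2 ≤ 2 * C := by
    intro n
    have h1 := hsv n
    have h2 := hvle n
    have h3 := hμb n
    have h4 := hC2 n
    have h5 := le_max_left C2 (0:ℝ)
    have h6 : (0:ℝ) ≤ max C1 0 := le_max_right C1 0
    linarith
  set R : ℝ := Real.sqrt (2 * C) with hR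
  have hRnn : 0 ≤ R := Real.sqrt_nonneg _
  have hRsq : R ^ 2 = 2 * C := Real.sq_sqrt (by linarith)
  have hcoordμ : ∀ n i, μ n i ≤ R := by
    intro n i
    have h1 : (μ n i) ^ 2 ≤ ∑ j, (μ n j) ^ 2 :=
      Finset.single_le_sum (fun j _ => sq_nonneg (μ n j)) (Finset.mem_univ i)
    have h2 := hμb n
    nlinarith [hμ0 n i, hRnn]
  have hcoords : ∀ n i, s n i ≤ R := by
    intro n i
    have h1 : (s n i) ^ 2 ≤ ∑ j, (s n j) ^ 2 :=
      Finset.single_le_sum (fun j _ => sq_nonneg (s n j)) (Finset.mem_univ i)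
    have h2 := hsb n
    nlinarith [hs0 n i, hRnn]
  -- key convergence 2 : ∑ (s n i - μ n i)^2 → 0
  set b : ℕ → ℝ := fun n => ∑ i, (s n i - μ n i) ^ 2 with hb
  have hb0 : ∀ n, 0 ≤ b n := fun n => Finset.sum_nonneg fun i _ => sq_nonneg _
  have key2 : Tendsto b atTop (𝓝 0) := by
    by_contra hbc
    rw [Metric.tendsto_atTop] at hbc
    push_neg at hbc
    obtain ⟨ε₀, hε₀, hfreq⟩ := hbc
    have hfreq' : ∀ N, ∃ n > N, ε₀ ≤ b n := by
      intro N
      obtain ⟨n, hn1, hn2⟩ := hfreq (N + 1)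
      refine ⟨n, by omega, ?_⟩
      rw [Real.dist_eq, sub_zero, abs_of_nonneg (hb0 n)] at hn2
      exact hn2
    obtain ⟨φ, hφmono, hφ⟩ := extraction_of_frequently_atTop (frequently_atTop'.mpr hfreq')
    -- compactness
    set K : Set ((Fin p → ℝ) × (Fin p → ℝ)) :=
      (Set.Icc 0 (fun _ => R)) ×ˢ (Set.Icc 0 (fun _ => R)) with hK
    have hKc : IsCompact K := (isCompact_Icc).prod (isCompact_Icc)
    set u : ℕ → (Fin p → ℝ) × (Fin p → ℝ) := fun n => (s n, μ n) with hu
    have humem : ∀ k, u (φ k) ∈ K := by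
      intro k
      refine ⟨⟨fun i => hs0 (φ k) i, fun i => hcoords (φ k) i⟩,
        ⟨fun i => hμ0 (φ k) i, fun i => hcoordμ (φ k) i⟩⟩
    obtain ⟨l, hlK, ψ, hψmono, hul⟩ := hKc.tendsto_subseq humem
    set χ : ℕ → ℕ := φ ∘ ψ with hχ
    have hχmono : StrictMono χ := hφmono.comp hψmono
    have hχtop : Tendsto χ atTop atTop := hχmono.tendsto_atTop
    have hsl : Tendsto (fun k => s (χ k)) atTop (𝓝 l.1) :=
      ((continuous_fst.tendsto l).comp hul)
    have hμl : Tendsto (fun k => μ (χ k)) atTop (𝓝 l.2) :=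
      ((continuous_snd.tendsto l).comp hul)
    have hsli : ∀ i, Tendsto (fun k => s (χ k) i) atTop (𝓝 (l.1 i)) :=
      fun i => (tendsto_pi_nhds.mp hsl) i
    have hμli : ∀ i, Tendsto (fun k => μ (χ k) i) atTop (𝓝 (l.2 i)) :=
      fun i => (tendsto_pi_nhds.mp hμl) i
    have hl10 : ∀ i, 0 ≤ l.1 i := fun i => ge_of_tendsto' (hsli i) (fun k => hs0 (χ k) i)
    have hl20 : ∀ i, 0 ≤ l.2 i := fun i => ge_of_tendsto' (hμli i) (fun k => hμ0 (χ k) i)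
    have hepsχ : Tendsto (fun k => eps (χ k)) atTop (𝓝 0) := heps0.comp hχtop
    -- positive coordinates agree in the limit
    have hposeq : ∀ i, 0 < l.2 i → l.1 i = l.2 i := by
      intro i hpos
      have hdle : ∀ k, d (s (χ k) i) (μ (χ k) i) ≤ ((eps (χ k) : ℝ) : EReal) := by
        intro k
        refine le_trans ?_ (hsf (χ k))
        exact ereal_single_le_sum _ (fun j =>
          d_nonneg hp hDbasic hA2 (hs0 (χ k) j) (hμ0 (χ k) j)) i
      have hmem : (l.1 i, l.2 i) ∈ Set.Ici (0:ℝ) ×ˢ Set.Ioi (0:ℝ) := ⟨hl10 i, hpos⟩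
      have hwithin : Tendsto (fun k => (s (χ k) i, μ (χ k) i)) atTop
          (𝓝[Set.Ici (0:ℝ) ×ˢ Set.Ioi (0:ℝ)] (l.1 i, l.2 i)) := by
        rw [tendsto_nhdsWithin_iff]
        constructor
        · exact (hsli i).prodMk_nhds (hμli i)
        · filter_upwards [(hμli i).eventually (eventually_gt_nhds hpos)] with k hk
          exact ⟨hs0 (χ k) i, hk⟩
      have htd : Tendsto (fun k => d (s (χ k) i) (μ (χ k) i)) atTop
          (𝓝 (d (l.1 i) (l.2 i))) :=
        ((hdcont (l.1 i, l.2 i) hmem).tendsto).comp hwithin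
      have heps' : Tendsto (fun k => ((eps (χ k) : ℝ) : EReal)) atTop (𝓝 (0:EReal)) := by
        have := EReal.tendsto_coe.mpr hepsχ
        simpa using this
      have hle0 : d (l.1 i) (l.2 i) ≤ 0 :=
        le_of_tendsto_of_tendsto' htd heps' hdle
      have hge0 : (0:EReal) ≤ d (l.1 i) (l.2 i) :=
        d_nonneg hp hDbasic hA2 (hl10 i) (hl20 i)
      exact d_zero_imp_eq hp hDbasic hA2 (hl10 i) (hl20 i) (le_antisymm hle0 hge0)
    -- limit norms
    have hsumle : ∑ i, (l.1 i) ^ 2 ≤ ∑ i, (l.2 i) ^ 2 := by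
      have hbound : ∀ k, ∑ i, (s (χ k) i) ^ 2 ≤ (∑ i, (μ (χ k) i) ^ 2) + eps (χ k) := by
        intro k
        have h1 := hsv (χ k)
        have h2 := hvle (χ k)
        linarith
      have htl : Tendsto (fun k => ∑ i, (s (χ k) i) ^ 2) atTop (𝓝 (∑ i, (l.1 i) ^ 2)) :=
        tendsto_finset_sum _ fun i _ => (hsli i).pow 2
      have htr : Tendsto (fun k => (∑ i, (μ (χ k) i) ^ 2) + eps (χ k)) atTop
          (𝓝 ((∑ i, (l.2 i) ^ 2) + 0)) :=
        (tendsto_finset_sum _ fun i _ => (hμli i).pow 2).add hepsχ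
      rw [add_zero] at htr
      exact le_of_tendsto_of_tendsto' htl htr hbound
    have hleq : l.1 = l.2 := by
      funext i
      rcases (hl20 i).lt_or_eq with hpos | hzero
      · exact hposeq i hpos
      · -- l.2 i = 0 ; show l.1 i = 0
        rw [← hzero]
        set Fp : Finset (Fin p) := Finset.univ.filter (fun j => 0 < l.2 j) with hFp
        have h2sum : ∑ j, (l.2 j) ^ 2 = ∑ j ∈ Fp, (l.2 j) ^ 2 := by
          rw [hFp]
          rw [Finset.sum_filter_of_ne]
          intro j _ hne
          rcases (hl20 j).lt_or_eq with h | h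
          · exact h
          · exact absurd (by rw [← h]; ring) hne
        have h12 : ∑ j ∈ Fp, (l.2 j) ^ 2 = ∑ j ∈ Fp, (l.1 j) ^ 2 := by
          refine Finset.sum_congr rfl fun j hj => ?_
          rw [hFp] at hj
          rw [hposeq j (Finset.mem_filter.mp hj).2]
        have hsplit : ∑ j ∈ Fp, (l.1 j) ^ 2 ≤ ∑ j, (l.1 j) ^ 2 :=
          Finset.sum_le_sum_of_subset_of_nonneg (Finset.filter_subset _ _)
            (fun j _ _ => sq_nonneg _)
        have hcompl : ∑ j ∈ Finset.univ \ Fp, (l.1 j) ^ 2 ≤ 0 := by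
          have h3 : ∑ j ∈ Finset.univ \ Fp, (l.1 j) ^ 2
              = (∑ j, (l.1 j) ^ 2) - ∑ j ∈ Fp, (l.1 j) ^ 2 := by
            rw [hFp]
            exact Finset.sum_sdiff_eq_sub (Finset.filter_subset _ _)
          rw [h3]
          have : ∑ j, (l.1 j) ^ 2 ≤ ∑ j ∈ Fp, (l.1 j) ^ 2 := by
            calc ∑ j, (l.1 j) ^ 2 ≤ ∑ j, (l.2 j) ^ 2 := hsumle
              _ = ∑ j ∈ Fp, (l.2 j) ^ 2 := h2sum
              _ = ∑ j ∈ Fp, (l.1 j) ^ 2 := h12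
          linarith
        have hmemc : i ∈ Finset.univ \ Fp := by
          rw [hFp]
          simp only [Finset.mem_sdiff, Finset.mem_univ, Finset.mem_filter, true_and]
          exact fun h => absurd h (by rw [← hzero]; exact lt_irrefl _)
        have hzero2 : (l.1 i) ^ 2 = 0 := by
          have hle : (l.1 i) ^ 2 ≤ 0 := by
            refine le_trans ?_ hcompl
            exact Finset.single_le_sum (fun j _ => sq_nonneg (l.1 j)) hmemc
          exact le_antisymm hle (sq_nonneg _)
        exact pow_eq_zero_iff (n := 2) (by norm_num) |>.mp hzero2
    -- contradiction
    have hbχ : Tendsto (fun k => b (χ k)) atTop (𝓝 0) := by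
      have htb : Tendsto (fun k => b (χ k)) atTop (𝓝 (∑ i, (l.1 i - l.2 i) ^ 2)) :=
        tendsto_finset_sum _ fun i _ => ((hsli i).sub (hμli i)).pow 2
      have : ∑ i, (l.1 i - l.2 i) ^ 2 = 0 := by
        rw [hleq]
        simp
      rwa [this] at htb
    have : ε₀ ≤ 0 := ge_of_tendsto' hbχ (fun k => hφ (ψ k)) |> fun h => le_trans h le_rfl
    · linarith
  -- combine everything
  have hbSg : ∀ n, frobSq (Sg n - Sn n ω) = b n := by
    intro n
    have hdiff : Sg n - Sn n ω = V n * Matrix.diagonal (fun i => s n i - μ n i) * (V n)ᵀ := by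
      simp only [hSgdef]
      rw [hdec n, ← Matrix.sub_mul, ← Matrix.mul_sub, Matrix.diagonal_sub]
    rw [hdiff, frobSq_conj (hVo n), frobSq_diagonal]
  have ha : Tendsto (fun n => frobSq (Xn n ω - Sg n)) atTop (𝓝 0) :=
    squeeze_zero (fun n => frobSq_nonneg _) key1 heps0
  have hbconv : Tendsto (fun n => frobSq (Sg n - Sn n ω)) atTop (𝓝 0) := by
    simp only [hbSg]; exact key2
  have hsqrt : Tendsto Real.sqrt (𝓝 0) (𝓝 0) := by
    have := Real.continuous_sqrt.tendsto 0
    rwa [Real.sqrt_zero] at this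
  have hnormconv : Tendsto (fun n => ‖emb (Xn n ω - S0)‖) atTop (𝓝 0) := by
    have hbound : ∀ n, ‖emb (Xn n ω - S0)‖ ≤
        Real.sqrt (frobSq (Xn n ω - Sg n)) + Real.sqrt (frobSq (Sg n - Sn n ω))
          + Real.sqrt (frobSq (Sn n ω - S0)) := by
      intro n
      have hdecomp : emb (Xn n ω - S0)
          = emb (Xn n ω - Sg n) + emb (Sg n - Sn n ω) + emb (Sn n ω - S0) := by
        simp only [emb_sub]
        abel
      rw [hdecomp, ← norm_emb_eq, ← norm_emb_eq, ← norm_emb_eq]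
      exact norm_add₃_le
    have hlim : Tendsto (fun n => Real.sqrt (frobSq (Xn n ω - Sg n))
        + Real.sqrt (frobSq (Sg n - Sn n ω)) + Real.sqrt (frobSq (Sn n ω - S0)))
        atTop (𝓝 0) := by
      have h1 := hsqrt.comp ha
      have h2 := hsqrt.comp hbconv
      have h3 := hsqrt.comp hconvω
      have := (h1.add h2).add h3
      simpa using this
    exact squeeze_zero (fun n => norm_nonneg _) hbound hlim
  have : Tendsto (fun n => frobSq (Xn n ω - S0)) atTop (𝓝 0) := by
    simp only [frobSq_eq_norm_sq]
    have := hnormconv.pow 2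
    simpa using this
  exact this
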